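/- Quantitative stability of entropic potentials: let π = e^{(f+g−c)/ε} μ⊗ν and π̃ = e^{(f̃+g̃−c)/ε} μ̃⊗ν̃ be probability measures on X × Y whose potentials satisfy the Schrödinger fixed-point equations g = T_μ(f), f = T_ν(g), g̃ = T_μ̃(f̃), f̃ = T_ν̃(g̃). Then ‖f − f̃‖_var + ‖g − g̃‖_var ≤ 2ε·e^{3D_c/ε}·(‖μ − μ̃‖_TV + ‖ν − ν̃‖_TV). -/

import Mathlib

open MeasureTheory Real

/- The oscillation seminorm `‖h‖_var = sup h − inf h`. -/
noncomputable def oscVar {α : Type*} (h : α → ℝ) : ℝ :=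
  sSup (Set.range h) - sInf (Set.range h)

/- Total variation distance between two finite measures. -/
noncomputable def tvDist {α : Type*} [MeasurableSpace α]
    (μ ν : Measure α) [IsFiniteMeasure μ] [IsFiniteMeasure ν] : ℝ :=
  ((μ.toSignedMeasure - ν.toSignedMeasure).totalVariation Set.univ).toReal

open Set
set_option maxHeartbeats 1000000
set_option linter.unusedSectionVars false
set_option linter.unusedVariables false

section helpers
variable {α : Type*} [MeasurableSpace α] {ρ : Measure α}

lemma integrable_of_bdd [IsFiniteMeasure ρ] {h : α → ℝ} {B : ℝ}
    (hm : Measurable h) (hb : ∀ a, |h a| ≤ B) : Integrable h ρ :=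
  (integrable_const B).mono' hm.aestronglyMeasurable (Filter.Eventually.of_forall (by simpa [abs_le] using hb))

lemma integral_le_of_forall_le [IsProbabilityMeasure ρ] {h : α → ℝ} {B C : ℝ}
    (hm : Measurable h) (hb : ∀ a, |h a| ≤ B) (hc : ∀ a, h a ≤ C) :
    ∫ a, h a ∂ρ ≤ C := by
  calc ∫ a, h a ∂ρ ≤ ∫ _, C ∂ρ := integral_mono (integrable_of_bdd hm hb) (integrable_const C) hc
  _ = C := by simp

lemma le_integral_of_forall_le [IsProbabilityMeasure ρ] {h : α → ℝ} {B C : ℝ}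
    (hm : Measurable h) (hb : ∀ a, |h a| ≤ B) (hc : ∀ a, C ≤ h a) :
    C ≤ ∫ a, h a ∂ρ := by
  calc C = ∫ _, C ∂ρ := by simp
  _ ≤ ∫ a, h a ∂ρ := integral_mono (integrable_const C) (integrable_of_bdd hm hb) hc

lemma exp_integral_pos [IsProbabilityMeasure ρ] {h : α → ℝ} {B : ℝ}
    (hm : Measurable h) (hb : ∀ a, |h a| ≤ B) :
    0 < ∫ a, exp (h a) ∂ρ := by
  have h1 : ∀ a, |exp (h a)| ≤ exp B := fun a => by
    rw [abs_of_pos (exp_pos _)]; exact exp_le_exp.2 ((abs_le.1 (hb a)).2)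
  have := le_integral_of_forall_le (ρ := ρ) (C := exp (-B)) (hm.exp) h1
    (fun a => exp_le_exp.2 ((abs_le.1 (hb a)).1))
  linarith [exp_pos (-B)]

lemma exp_integral_ratio [IsProbabilityMeasure ρ] {h₁ h₂ : α → ℝ} {B k : ℝ}
    (hm₁ : Measurable h₁) (hb₁ : ∀ a, |h₁ a| ≤ B) (hm₂ : Measurable h₂) (hb₂ : ∀ a, |h₂ a| ≤ B)
    (hk : ∀ a, h₁ a ≤ h₂ a + k) :
    ∫ a, exp (h₁ a) ∂ρ ≤ exp k * ∫ a, exp (h₂ a) ∂ρ := by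
  have h2 : ∀ a, |exp (h₂ a)| ≤ exp B := fun a => by
    rw [abs_of_pos (exp_pos _)]; exact exp_le_exp.2 ((abs_le.1 (hb₂ a)).2)
  have h1 : ∀ a, |exp (h₁ a)| ≤ exp B := fun a => by
    rw [abs_of_pos (exp_pos _)]; exact exp_le_exp.2 ((abs_le.1 (hb₁ a)).2)
  calc ∫ a, exp (h₁ a) ∂ρ ≤ ∫ a, exp k * exp (h₂ a) ∂ρ := by
        refine integral_mono (integrable_of_bdd hm₁.exp h1) ((integrable_of_bdd hm₂.exp h2).const_mul _) (fun a => ?_)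
        rw [← Real.exp_add]; exact exp_le_exp.2 (by linarith [hk a])
  _ = exp k * ∫ a, exp (h₂ a) ∂ρ := integral_const_mul _ _

end helpers

section core
variable {Y : Type*} [MeasurableSpace Y] [Nonempty Y] {ν : Measure Y} [IsProbabilityMeasure ν]

/-- The key one-step contraction estimate between two tilted expectations. -/
lemma core_shift (u ψ ψ' : Y → ℝ) (hum : Measurable u) (hψm : Measurable ψ) (hψ'm : Measurable ψ')
    (Bu : ℝ) (hu_bdd : ∀ y, |u y| ≤ Bu) (Bψ : ℝ) (hψ_bdd : ∀ y, |ψ y| ≤ Bψ)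
    (hψ'_bdd : ∀ y, |ψ' y| ≤ Bψ)
    (K : ℝ) (hK : ∀ y y', u y - u y' ≤ K)
    (d : ℝ) (hd : 0 ≤ d) (hosc : ∀ y y', (ψ' y - ψ y) - (ψ' y' - ψ y') ≤ 2 * d) :
    (∫ y, u y * exp (ψ' y) ∂ν) / (∫ y, exp (ψ' y) ∂ν)
      - (∫ y, u y * exp (ψ y) ∂ν) / (∫ y, exp (ψ y) ∂ν) ≤ K * (1 - exp (-d)) := by
  have y₀ : Y := Classical.arbitrary Y
  have hK0 : 0 ≤ K := by have := hK y₀ y₀; linarith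
  set Z := ∫ y, exp (ψ y) ∂ν with hZdef
  set Z' := ∫ y, exp (ψ' y) ∂ν with hZ'def
  have hZ : 0 < Z := exp_integral_pos hψm hψ_bdd
  have hZ' : 0 < Z' := exp_integral_pos hψ'm hψ'_bdd
  -- the tilt function and its range bounds
  set b : Y → ℝ := fun y => ψ' y - ψ y with hbdef
  have hbm : Measurable b := hψ'm.sub hψm
  have hb_bdd : ∀ y, |b y| ≤ 2 * Bψ := fun y => by
    have := abs_le.1 (hψ_bdd y); have := abs_le.1 (hψ'_bdd y)
    rw [abs_le]; constructor <;> simp only [hbdef] <;> nlinarith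
  have hrange : (Set.range b).Nonempty := ⟨b y₀, ⟨y₀, rfl⟩⟩
  have hbdd_above : BddAbove (Set.range b) := ⟨2 * Bψ, by rintro _ ⟨y, rfl⟩; exact (abs_le.1 (hb_bdd y)).2⟩
  have hbdd_below : BddBelow (Set.range b) := ⟨-(2 * Bψ), by rintro _ ⟨y, rfl⟩; exact (abs_le.1 (hb_bdd y)).1⟩
  set i := sInf (Set.range b) with hidef
  set s := sSup (Set.range b) with hsdef
  have hi_le : ∀ y, i ≤ b y := fun y => csInf_le hbdd_below ⟨y, rfl⟩
  have hle_s : ∀ y, b y ≤ s := fun y => le_csSup hbdd_above ⟨y, rfl⟩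
  have hsi : s ≤ i + 2 * d := by
    apply csSup_le hrange
    rintro _ ⟨y, rfl⟩
    have : b y - 2 * d ≤ i := by
      apply le_csInf hrange
      rintro _ ⟨y', rfl⟩
      have := hosc y y'; simp only [hbdef] at *; linarith
    linarith
  set L := exp i with hLdef
  set U := exp s with hUdef
  have hL : 0 < L := exp_pos _
  have hU : 0 < U := exp_pos _
  have hUL : U ≤ exp (2 * d) * L := by
    rw [hUdef, hLdef, ← Real.exp_add]; exact exp_le_exp.2 (by linarith)
  -- comparison of the two partition functions
  have hLZ : L * Z ≤ Z' := by
    have := exp_integral_ratio (ρ := ν) (B := Bψ) (k := -i) hψm hψ_bdd hψ'm hψ'_bdd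
      (fun y => by have := hi_le y; simp only [hbdef] at this; linarith)
    calc L * Z ≤ L * (exp (-i) * Z') := by nlinarith
    _ = Z' := by rw [hLdef, ← mul_assoc, ← Real.exp_add]; simp
  have hZU : Z' ≤ U * Z := by
    have := exp_integral_ratio (ρ := ν) (B := Bψ) (k := s) hψ'm hψ'_bdd hψm hψ_bdd
      (fun y => by have := hle_s y; simp only [hbdef] at this; linarith)
    calc Z' ≤ exp s * Z := this
    _ = U * Z := by rw [hUdef]
  -- the signed density difference
  set r : Y → ℝ := fun y => exp (ψ' y) / Z' - exp (ψ y) / Z with hrdef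
  have hrm : Measurable r := (hψ'm.exp.div_const _).sub (hψm.exp.div_const _)
  have hexpb : ∀ (φ : Y → ℝ), (∀ y, |φ y| ≤ Bψ) → ∀ y, |exp (φ y)| ≤ exp Bψ := fun φ hφ y => by
    rw [abs_of_pos (exp_pos _)]; exact exp_le_exp.2 ((abs_le.1 (hφ y)).2)
  have hint1 : Integrable (fun y => exp (ψ' y) / Z') ν :=
    (integrable_of_bdd hψ'm.exp (hexpb ψ' hψ'_bdd)).div_const _
  have hint2 : Integrable (fun y => exp (ψ y) / Z) ν :=
    (integrable_of_bdd hψm.exp (hexpb ψ hψ_bdd)).div_const _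
  have hr_int : Integrable r ν := hint1.sub hint2
  have hBr : ∀ y, |r y| ≤ exp Bψ / Z' + exp Bψ / Z := fun y => by
    have h1 : exp (ψ' y) ≤ exp Bψ := exp_le_exp.2 ((abs_le.1 (hψ'_bdd y)).2)
    have h2 : exp (ψ y) ≤ exp Bψ := exp_le_exp.2 ((abs_le.1 (hψ_bdd y)).2)
    have e1 := (exp_pos (ψ' y)).le
    have e2 := (exp_pos (ψ y)).le
    calc |r y| ≤ |exp (ψ' y) / Z'| + |exp (ψ y) / Z| := abs_sub _ _
    _ = exp (ψ' y) / Z' + exp (ψ y) / Z := by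
        rw [abs_of_nonneg (div_nonneg e1 hZ'.le), abs_of_nonneg (div_nonneg e2 hZ.le)]
    _ ≤ exp Bψ / Z' + exp Bψ / Z := by gcongr
  have hr_0 : ∫ y, r y ∂ν = 0 := by
    rw [hrdef]
    rw [integral_sub hint1 hint2, integral_div, integral_div, ← hZdef, ← hZ'def]
    field_simp
    ring
  -- midpoint of u
  have hurange : (Set.range u).Nonempty := ⟨u y₀, ⟨y₀, rfl⟩⟩
  have hu_above : BddAbove (Set.range u) := ⟨Bu, by rintro _ ⟨y, rfl⟩; exact (abs_le.1 (hu_bdd y)).2⟩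
  have hu_below : BddBelow (Set.range u) := ⟨-Bu, by rintro _ ⟨y, rfl⟩; exact (abs_le.1 (hu_bdd y)).1⟩
  set su := sSup (Set.range u) with hsudef
  set iu := sInf (Set.range u) with hiudef
  have hu_le : ∀ y, u y ≤ su := fun y => le_csSup hu_above ⟨y, rfl⟩
  have hiu_le : ∀ y, iu ≤ u y := fun y => csInf_le hu_below ⟨y, rfl⟩
  have hsuiu : su ≤ iu + K := by
    apply csSup_le hurange
    rintro _ ⟨y, rfl⟩
    have : u y - K ≤ iu := by
      apply le_csInf hurange
      rintro _ ⟨y', rfl⟩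
      have := hK y y'; linarith
    linarith
  set m := (su + iu) / 2 with hmdef
  have hum2 : ∀ y, |u y - m| ≤ K / 2 := fun y =>
    abs_le.2 ⟨by have := hiu_le y; simp only [hmdef]; linarith,
              by have := hu_le y; simp only [hmdef]; linarith⟩
  -- rewrite LHS as ∫ (u - m) * r
  have hint_ur : Integrable (fun y => u y * r y) ν :=
    integrable_of_bdd (hum.mul hrm) (B := Bu * (exp Bψ / Z' + exp Bψ / Z)) (fun y => by
      rw [abs_mul]
      have h0 : (0:ℝ) ≤ |r y| := abs_nonneg _
      have := hu_bdd y; have := hBr y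
      nlinarith [abs_nonneg (u y)])
  have hint_uψ' : Integrable (fun y => u y * exp (ψ' y)) ν :=
    integrable_of_bdd (hum.mul hψ'm.exp) (B := Bu * exp Bψ) (fun y => by
      rw [abs_mul]
      have h1 := hexpb ψ' hψ'_bdd y
      have := hu_bdd y
      nlinarith [abs_nonneg (u y), abs_nonneg (exp (ψ' y))])
  have hint_uψ : Integrable (fun y => u y * exp (ψ y)) ν :=
    integrable_of_bdd (hum.mul hψm.exp) (B := Bu * exp Bψ) (fun y => by
      rw [abs_mul]
      have h1 := hexpb ψ hψ_bdd y
      have := hu_bdd y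
      nlinarith [abs_nonneg (u y), abs_nonneg (exp (ψ y))])
  have hLHS : (∫ y, u y * exp (ψ' y) ∂ν) / Z' - (∫ y, u y * exp (ψ y) ∂ν) / Z
      = ∫ y, u y * r y ∂ν := by
    rw [← integral_div, ← integral_div, ← integral_sub (hint_uψ'.div_const _) (hint_uψ.div_const _)]
    congr 1; funext y; rw [hrdef]; ring
  have hint_mr : Integrable (fun y => m * r y) ν := hr_int.const_mul m
  have hsplit : ∫ y, u y * r y ∂ν = ∫ y, (u y - m) * r y ∂ν := by
    have : ∫ y, (u y - m) * r y ∂ν = ∫ y, u y * r y ∂ν - ∫ y, m * r y ∂ν := by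
      rw [← integral_sub hint_ur hint_mr]; congr 1; funext y; ring
    rw [this, integral_const_mul, hr_0, mul_zero, sub_zero]
  -- positive and negative parts of r
  set pos : Y → ℝ := fun y => max (r y) 0 with hposdef
  set neg : Y → ℝ := fun y => max (-r y) 0 with hnegdef
  have hposm : Measurable pos := hrm.max measurable_const
  have hnegm : Measurable neg := hrm.neg.max measurable_const
  have habs_pn : ∀ y, |r y| = pos y + neg y := fun y => by
    rcases le_total (r y) 0 with h | h
    · simp [hposdef, hnegdef, abs_of_nonpos h, max_eq_right h, max_eq_left (neg_nonneg.2 h)]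
    · simp [hposdef, hnegdef, abs_of_nonneg h, max_eq_left h, max_eq_right (neg_nonpos.2 h)]
  have hsub_pn : ∀ y, r y = pos y - neg y := fun y => by
    rcases le_total (r y) 0 with h | h
    · simp [hposdef, hnegdef, max_eq_right h, max_eq_left (neg_nonneg.2 h)]
    · simp [hposdef, hnegdef, max_eq_left h, max_eq_right (neg_nonpos.2 h)]
  have hpos_bdd : ∀ y, |pos y| ≤ exp Bψ / Z' + exp Bψ / Z := fun y => by
    have hpy : pos y = max (r y) 0 := rfl
    rw [hpy, abs_of_nonneg (le_max_right _ _)]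
    rcases le_total (r y) 0 with h | h
    · rw [max_eq_right h]; positivity
    · rw [max_eq_left h, ← abs_of_nonneg h]; exact hBr y
  have hneg_bdd : ∀ y, |neg y| ≤ exp Bψ / Z' + exp Bψ / Z := fun y => by
    have hpy : neg y = max (-r y) 0 := rfl
    rw [hpy, abs_of_nonneg (le_max_right _ _)]
    rcases le_total (r y) 0 with h | h
    · rw [max_eq_left (neg_nonneg.2 h), ← abs_of_nonpos h]; exact hBr y
    · rw [max_eq_right (neg_nonpos.2 h)]; positivity
  have hpos_int : Integrable pos ν := integrable_of_bdd hposm hpos_bdd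
  have hneg_int : Integrable neg ν := integrable_of_bdd hnegm hneg_bdd
  have hpn_eq : ∫ y, pos y ∂ν = ∫ y, neg y ∂ν := by
    have : ∫ y, (pos y - neg y) ∂ν = 0 := by
      rw [← hr_0]; congr 1; funext y; rw [← hsub_pn]
    rw [integral_sub hpos_int hneg_int] at this; linarith
  -- pointwise bound on pos
  have hexp_eq : ∀ y, exp (ψ' y) = exp (b y) * exp (ψ y) := fun y => by
    rw [← Real.exp_add]; congr 1; simp [hbdef]
  have hLpt : ∀ y, L * exp (ψ y) ≤ exp (ψ' y) := fun y => by
    rw [hexp_eq y]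
    have : L ≤ exp (b y) := by rw [hLdef]; exact exp_le_exp.2 (hi_le y)
    nlinarith [exp_pos (ψ y)]
  have hUpt : ∀ y, exp (ψ' y) ≤ U * exp (ψ y) := fun y => by
    rw [hexp_eq y]
    have : exp (b y) ≤ U := by rw [hUdef]; exact exp_le_exp.2 (hle_s y)
    nlinarith [exp_pos (ψ y)]
  have hpos_pt : ∀ y, pos y ≤ (exp (ψ' y) - L * exp (ψ y)) / Z' := fun y => by
    apply max_le
    · rw [hrdef]
      have h1 : L * exp (ψ y) / Z' ≤ exp (ψ y) / Z := by
        rw [div_le_div_iff₀ hZ' hZ]; nlinarith [exp_pos (ψ y)]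
      have : (exp (ψ' y) - L * exp (ψ y)) / Z' = exp (ψ' y) / Z' - L * exp (ψ y) / Z' := by ring
      rw [this]; linarith
    · apply div_nonneg _ hZ'.le; linarith [hLpt y]
  have hneg_pt : ∀ y, neg y ≤ (exp (ψ y) - exp (ψ' y) / U) / Z := fun y => by
    apply max_le
    · rw [hrdef]
      have h1 : exp (ψ' y) / (U * Z) ≤ exp (ψ' y) / Z' :=
        div_le_div_of_nonneg_left (exp_pos _).le hZ' hZU
      have h2 : (exp (ψ y) - exp (ψ' y) / U) / Z = exp (ψ y) / Z - exp (ψ' y) / (U * Z) := by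
        field_simp
      rw [h2]; simp only [neg_sub]; linarith
    · apply div_nonneg _ hZ.le
      have := hUpt y
      have h3 : exp (ψ' y) / U ≤ exp (ψ y) := by rw [div_le_iff₀ hU]; linarith
      linarith
  -- integral bounds
  have hLZ' : Integrable (fun y => (exp (ψ' y) - L * exp (ψ y)) / Z') ν :=
    (((integrable_of_bdd hψ'm.exp (hexpb ψ' hψ'_bdd)).sub
      ((integrable_of_bdd hψm.exp (hexpb ψ hψ_bdd)).const_mul L)).div_const _)
  have hpos_ile : ∫ y, pos y ∂ν ≤ 1 - L * Z / Z' := by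
    have := integral_mono hpos_int hLZ' hpos_pt
    calc ∫ y, pos y ∂ν ≤ ∫ y, (exp (ψ' y) - L * exp (ψ y)) / Z' ∂ν := this
    _ = (Z' - L * Z) / Z' := by
        rw [integral_div, integral_sub (integrable_of_bdd hψ'm.exp (hexpb ψ' hψ'_bdd))
          ((integrable_of_bdd hψm.exp (hexpb ψ hψ_bdd)).const_mul L), integral_const_mul,
          ← hZdef, ← hZ'def]
    _ = 1 - L * Z / Z' := by field_simp
  have hUZ' : Integrable (fun y => (exp (ψ y) - exp (ψ' y) / U) / Z) ν :=
    (((integrable_of_bdd hψm.exp (hexpb ψ hψ_bdd)).sub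
      ((integrable_of_bdd hψ'm.exp (hexpb ψ' hψ'_bdd)).div_const U)).div_const _)
  have hneg_ile : ∫ y, neg y ∂ν ≤ 1 - Z' / (U * Z) := by
    have := integral_mono hneg_int hUZ' hneg_pt
    calc ∫ y, neg y ∂ν ≤ ∫ y, (exp (ψ y) - exp (ψ' y) / U) / Z ∂ν := this
    _ = (Z - Z' / U) / Z := by
        rw [integral_div, integral_sub (integrable_of_bdd hψm.exp (hexpb ψ hψ_bdd))
          ((integrable_of_bdd hψ'm.exp (hexpb ψ' hψ'_bdd)).div_const U), integral_div,
          ← hZdef, ← hZ'def]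
    _ = 1 - Z' / (U * Z) := by field_simp
  -- the geometric-mean trick
  have hkey : exp (-d) ≤ max (L * Z / Z') (Z' / (U * Z)) := by
    by_contra hcon
    push_neg at hcon
    have h1 : L * Z / Z' < exp (-d) := lt_of_le_of_lt (le_max_left _ _) hcon
    have h2 : Z' / (U * Z) < exp (-d) := lt_of_le_of_lt (le_max_right _ _) hcon
    have hprod : (L * Z / Z') * (Z' / (U * Z)) = L / U := by field_simp
    have hpos1 : 0 < L * Z / Z' := by positivity
    have hpos2 : 0 < Z' / (U * Z) := by positivity
    have h3 : L / U < exp (-d) * exp (-d) := by rw [← hprod]; nlinarith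
    have h4 : exp (-d) * exp (-d) = exp (-(2 * d)) := by rw [← Real.exp_add]; ring_nf
    have h5 : exp (-(2 * d)) * exp (2 * d) = 1 := by rw [← Real.exp_add]; simp
    have h6 : exp (-(2 * d)) * U ≤ L := by
      have := mul_le_mul_of_nonneg_left hUL (exp_pos (-(2 * d))).le
      calc exp (-(2 * d)) * U ≤ exp (-(2 * d)) * (exp (2 * d) * L) := this
      _ = L := by rw [← mul_assoc, h5, one_mul]
    have h7 : L / U < exp (-(2 * d)) := by rw [← h4]; exact h3
    rw [div_lt_iff₀ hU] at h7
    nlinarith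
  have hhalf : ∫ y, pos y ∂ν + ∫ y, neg y ∂ν ≤ 2 * (1 - exp (-d)) := by
    rcases le_max_iff.1 hkey with h | h
    · have : ∫ y, pos y ∂ν ≤ 1 - exp (-d) := by linarith [hpos_ile]
      linarith [hpn_eq]
    · have : ∫ y, neg y ∂ν ≤ 1 - exp (-d) := by linarith [hneg_ile]
      linarith [hpn_eq]
  -- final chain
  have habs_int : Integrable (fun y => |r y|) ν := hr_int.abs
  have hstep : ∫ y, (u y - m) * r y ∂ν ≤ K / 2 * ∫ y, |r y| ∂ν := by
    rw [← integral_const_mul]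
    refine integral_mono ((hint_ur.sub hint_mr).congr ?_) (habs_int.const_mul _) (fun y => ?_)
    · exact Filter.Eventually.of_forall (fun y => by simp only [Pi.sub_apply]; ring)
    · calc (u y - m) * r y ≤ |(u y - m) * r y| := le_abs_self _
      _ = |u y - m| * |r y| := abs_mul _ _
      _ ≤ K / 2 * |r y| := mul_le_mul_of_nonneg_right (hum2 y) (abs_nonneg _)
  have habs_split : ∫ y, |r y| ∂ν = ∫ y, pos y ∂ν + ∫ y, neg y ∂ν := by
    rw [← integral_add hpos_int hneg_int]; congr 1; funext y; rw [habs_pn]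
  rw [hLHS, hsplit]
  calc ∫ y, (u y - m) * r y ∂ν ≤ K / 2 * ∫ y, |r y| ∂ν := hstep
  _ = K / 2 * (∫ y, pos y ∂ν + ∫ y, neg y ∂ν) := by rw [habs_split]
  _ ≤ K / 2 * (2 * (1 - exp (-d))) := by
      apply mul_le_mul_of_nonneg_left hhalf; linarith
  _ = K * (1 - exp (-d)) := by ring


end core

section osc
variable {α : Type*} [Nonempty α] {h : α → ℝ} {B : ℝ}

lemma oscVar_le (hb : ∀ a, |h a| ≤ B) {K : ℝ} (hK : ∀ a b, h a - h b ≤ K) : oscVar h ≤ K := by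
  have hne : (Set.range h).Nonempty := ⟨h (Classical.arbitrary α), ⟨_, rfl⟩⟩
  have hba : BddAbove (Set.range h) := ⟨B, by rintro _ ⟨a, rfl⟩; exact (abs_le.1 (hb a)).2⟩
  have hbb : BddBelow (Set.range h) := ⟨-B, by rintro _ ⟨a, rfl⟩; exact (abs_le.1 (hb a)).1⟩
  have : sSup (Set.range h) ≤ sInf (Set.range h) + K := by
    apply csSup_le hne
    rintro _ ⟨a, rfl⟩
    have : h a - K ≤ sInf (Set.range h) := by
      apply le_csInf hne
      rintro _ ⟨b, rfl⟩
      linarith [hK a b]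
    linarith
  rw [oscVar]; linarith

lemma pair_le_oscVar (hb : ∀ a, |h a| ≤ B) (a b : α) : h a - h b ≤ oscVar h := by
  have hba : BddAbove (Set.range h) := ⟨B, by rintro _ ⟨a, rfl⟩; exact (abs_le.1 (hb a)).2⟩
  have hbb : BddBelow (Set.range h) := ⟨-B, by rintro _ ⟨a, rfl⟩; exact (abs_le.1 (hb a)).1⟩
  have h1 : h a ≤ sSup (Set.range h) := le_csSup hba ⟨a, rfl⟩
  have h2 : sInf (Set.range h) ≤ h b := csInf_le hbb ⟨b, rfl⟩
  rw [oscVar]; linarith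

lemma oscVar_nonneg (hb : ∀ a, |h a| ≤ B) : 0 ≤ oscVar h := by
  have := pair_le_oscVar hb (Classical.arbitrary α) (Classical.arbitrary α); linarith
end osc

section tv
variable {α : Type*} [MeasurableSpace α] [Nonempty α] (ν νt : Measure α)
  [IsProbabilityMeasure ν] [IsProbabilityMeasure νt]

omit [Nonempty α] in
lemma tvDist_nonneg : 0 ≤ tvDist ν νt := ENNReal.toReal_nonneg

lemma integral_diff_le_tv {φ : α → ℝ} {C : ℝ} (hm : Measurable φ) (hb : ∀ a, |φ a| ≤ C) :
    ∫ a, φ a ∂ν - ∫ a, φ a ∂νt ≤ C * tvDist ν νt := by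
  set s := ν.toSignedMeasure - νt.toSignedMeasure with hs
  set P := s.toJordanDecomposition.posPart with hP
  set N := s.toJordanDecomposition.negPart with hN
  have hPN : s = P.toSignedMeasure - N.toSignedMeasure := by
    conv_lhs => rw [← s.toSignedMeasure_toJordanDecomposition]
    rfl
  -- measure equality ν + N = νt + P
  have hmeq : ν + N = νt + P := by
    ext A hA
    have h1 : s A = (ν A).toReal - (νt A).toReal := by
      rw [hs, VectorMeasure.sub_apply, Measure.toSignedMeasure_apply_measurable hA,
        Measure.toSignedMeasure_apply_measurable hA]; rfl
    have h2 : s A = (P A).toReal - (N A).toReal := by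
      rw [hPN, VectorMeasure.sub_apply, Measure.toSignedMeasure_apply_measurable hA,
        Measure.toSignedMeasure_apply_measurable hA]; rfl
    have hfin : ∀ (m : Measure α) [IsFiniteMeasure m], m A ≠ ⊤ :=
      fun m _ => (measure_lt_top m A).ne
    rw [Measure.add_apply, Measure.add_apply]
    have := h1.symm.trans h2
    have h3 : (ν A).toReal + (N A).toReal = (νt A).toReal + (P A).toReal := by linarith
    rw [← ENNReal.toReal_add (hfin ν) (hfin N), ← ENNReal.toReal_add (hfin νt) (hfin P)] at h3
    exact (ENNReal.toReal_eq_toReal_iff' (by finiteness) (by finiteness)).mp h3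
  have hint : ∀ (m : Measure α) [IsFiniteMeasure m], Integrable φ m := fun m _ =>
    (integrable_const C).mono' hm.aestronglyMeasurable
      (Filter.Eventually.of_forall (by simpa [abs_le] using hb))
  have hieq : ∫ a, φ a ∂ν + ∫ a, φ a ∂N = ∫ a, φ a ∂νt + ∫ a, φ a ∂P := by
    rw [← integral_add_measure (hint ν) (hint N), ← integral_add_measure (hint νt) (hint P), hmeq]
  have habs : ∀ (m : Measure α) [IsFiniteMeasure m], |∫ a, φ a ∂m| ≤ C * (m univ).toReal := by
    intro m _
    have hstep : |∫ a, φ a ∂m| ≤ ∫ a, |φ a| ∂m := by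
      simpa [Real.norm_eq_abs] using norm_integral_le_integral_norm (μ := m) φ
    calc |∫ a, φ a ∂m| ≤ ∫ a, |φ a| ∂m := hstep
    _ ≤ ∫ _, C ∂m := integral_mono (hint m).abs (integrable_const C) hb
    _ = C * (m univ).toReal := by simp [smul_eq_mul, mul_comm, Measure.real]
  have htv : tvDist ν νt = (P univ).toReal + (N univ).toReal := by
    rw [tvDist, ← hs, SignedMeasure.totalVariation, Measure.add_apply,
      ENNReal.toReal_add (measure_lt_top _ _).ne (measure_lt_top _ _).ne]
  have := habs P; have := habs N
  rw [htv]
  have h4 : ∫ a, φ a ∂ν - ∫ a, φ a ∂νt = ∫ a, φ a ∂P - ∫ a, φ a ∂N := by linarith [hieq]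
  rw [h4]
  have hC : 0 ≤ C := le_trans (abs_nonneg _) (hb (Classical.arbitrary α))
  have hP' := habs P
  have hN' := habs N
  have := abs_le.1 hP'
  have := abs_le.1 hN'
  have h5 := (abs_le.1 (habs P)).2
  have h6 := (abs_le.1 (habs N)).1
  nlinarith [ENNReal.toReal_nonneg (a := P univ), ENNReal.toReal_nonneg (a := N univ)]

end tv

section pot
variable {X Y : Type*} [MeasurableSpace X] [MeasurableSpace Y] [Nonempty X] [Nonempty Y]

/-- Oscillation control for a potential satisfying the Schrödinger fixed point equation. -/
lemma pot_osc (μt : Measure X) [IsProbabilityMeasure μt]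
    (c : X → Y → ℝ) (hc_meas : Measurable (Function.uncurry c))
    (Mc : ℝ) (hc_bdd : ∀ x y, |c x y| ≤ Mc)
    (ε : ℝ) (hε : 0 < ε) (Dc : ℝ)
    (hDc : ∀ x x' y y', c x y + c x' y' - c x y' - c x' y ≤ 2 * Dc)
    (ft : X → ℝ) (hft_meas : Measurable ft) (Mf : ℝ) (hft_bdd : ∀ x, |ft x| ≤ Mf)
    (gt : Y → ℝ)
    (hgt : ∀ y, gt y = -ε * log (∫ x, exp ((ft x - c x y) / ε) ∂μt)) :
    ∀ x y y', (gt y - c x y) - (gt y' - c x y') ≤ 2 * Dc := by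
  intro x y y'
  set I : Y → ℝ := fun z => ∫ x', exp ((ft x' - c x' z) / ε) ∂μt with hIdef
  have hmeas : ∀ z : Y, Measurable (fun x' => (ft x' - c x' z) / ε) := fun z =>
    (hft_meas.sub (hc_meas.comp (measurable_prodMk_right (y := z)))).div_const ε
  have hbdd : ∀ (z : Y) (x' : X), |(ft x' - c x' z) / ε| ≤ (Mf + Mc) / ε := fun z x' => by
    rw [abs_div, abs_of_pos hε]
    apply div_le_div_of_nonneg_right _ hε.le
    have := abs_le.1 (hft_bdd x'); have := abs_le.1 (hc_bdd x' z)
    rw [abs_le]; constructor <;> linarith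
  have hIpos : ∀ z, 0 < I z := fun z => exp_integral_pos (hmeas z) (hbdd z)
  set k := (2 * Dc + c x y - c x y') / ε with hkdef
  have hcomp : I y' ≤ exp k * I y := by
    apply exp_integral_ratio (hmeas y') (hbdd y') (hmeas y) (hbdd y)
    intro x'
    rw [← add_div, div_le_div_iff_of_pos_right hε]
    have := hDc x' x y y'
    linarith
  have hlog : log (I y') ≤ k + log (I y) := by
    calc log (I y') ≤ log (exp k * I y) := Real.log_le_log (hIpos y') hcomp
    _ = k + log (I y) := by rw [Real.log_mul (exp_ne_zero k) (hIpos y).ne', Real.log_exp]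
  have hgty : gt y = -ε * log (I y) := hgt y
  have hgty' : gt y' = -ε * log (I y') := hgt y'
  have : gt y - gt y' = ε * (log (I y') - log (I y)) := by rw [hgty, hgty']; ring
  have hεk : ε * k = 2 * Dc + c x y - c x y' := by rw [hkdef]; field_simp
  nlinarith [hlog, hε]

/-- Stability of the log-partition functional in the base measure. -/
lemma log_int_stab (ν νt : Measure Y) [IsProbabilityMeasure ν] [IsProbabilityMeasure νt]
    (φ : Y → ℝ) (hφm : Measurable φ) (Bφ : ℝ) (hφb : ∀ y, |φ y| ≤ Bφ)
    (d : ℝ) (hd : 0 ≤ d) (hosc : ∀ y y', φ y - φ y' ≤ 2 * d) :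
    |log (∫ y, exp (φ y) ∂ν) - log (∫ y, exp (φ y) ∂νt)|
      ≤ (exp (2 * d) - 1) / 2 * tvDist ν νt := by
  have y₀ : Y := Classical.arbitrary Y
  set A := ∫ y, exp (φ y) ∂ν with hA
  set At := ∫ y, exp (φ y) ∂νt with hAt
  have hApos : 0 < A := exp_integral_pos hφm hφb
  have hAtpos : 0 < At := exp_integral_pos hφm hφb
  have hrange : (Set.range φ).Nonempty := ⟨φ y₀, ⟨y₀, rfl⟩⟩
  have hba : BddAbove (Set.range φ) := ⟨Bφ, by rintro _ ⟨a, rfl⟩; exact (abs_le.1 (hφb a)).2⟩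
  have hbb : BddBelow (Set.range φ) := ⟨-Bφ, by rintro _ ⟨a, rfl⟩; exact (abs_le.1 (hφb a)).1⟩
  set i := sInf (Set.range φ) with hidef
  set s := sSup (Set.range φ) with hsdef
  have hi_le : ∀ y, i ≤ φ y := fun y => csInf_le hbb ⟨y, rfl⟩
  have hle_s : ∀ y, φ y ≤ s := fun y => le_csSup hba ⟨y, rfl⟩
  have hsi : s ≤ i + 2 * d := by
    apply csSup_le hrange
    rintro _ ⟨y, rfl⟩
    have : φ y - 2 * d ≤ i := by
      apply le_csInf hrange
      rintro _ ⟨y', rfl⟩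
      linarith [hosc y y']
    linarith
  set L := exp i with hLdef
  set U := exp s with hUdef
  have hL : 0 < L := exp_pos _
  have hU : 0 < U := exp_pos _
  have hUL : U ≤ exp (2 * d) * L := by
    rw [hUdef, hLdef, ← Real.exp_add]; exact exp_le_exp.2 (by linarith)
  have hLpt : ∀ y, L ≤ exp (φ y) := fun y => exp_le_exp.2 (hi_le y)
  have hUpt : ∀ y, exp (φ y) ≤ U := fun y => exp_le_exp.2 (hle_s y)
  have hLA : ∀ (ρ : Measure Y) [IsProbabilityMeasure ρ], L ≤ ∫ y, exp (φ y) ∂ρ := by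
    intro ρ _
    exact le_integral_of_forall_le hφm.exp (fun y => by
      rw [abs_of_pos (exp_pos _)]; exact exp_le_exp.2 ((abs_le.1 (hφb y)).2)) hLpt
  -- centered comparison
  set ψ : Y → ℝ := fun y => exp (φ y) - (U + L) / 2 with hψdef
  have hψm : Measurable ψ := hφm.exp.sub measurable_const
  have hψb : ∀ y, |ψ y| ≤ (U - L) / 2 := fun y => by
    rw [hψdef, abs_le]; constructor <;> simp only [] <;> [linarith [hLpt y]; linarith [hUpt y]]
  have hdiff1 : ∫ y, ψ y ∂ν - ∫ y, ψ y ∂νt ≤ (U - L) / 2 * tvDist ν νt :=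
    integral_diff_le_tv ν νt hψm hψb
  have hdiff2 : ∫ y, ψ y ∂νt - ∫ y, ψ y ∂ν ≤ (U - L) / 2 * tvDist ν νt := by
    have := integral_diff_le_tv ν νt (φ := fun y => -ψ y) hψm.neg (fun y => by
      rw [abs_neg]; exact hψb y)
    rw [integral_neg, integral_neg] at this
    linarith
  have hψint : ∀ (ρ : Measure Y) [IsProbabilityMeasure ρ],
      ∫ y, ψ y ∂ρ = (∫ y, exp (φ y) ∂ρ) - (U + L) / 2 := by
    intro ρ _
    rw [hψdef, integral_sub (integrable_of_bdd hφm.exp (fun y => by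
      rw [abs_of_pos (exp_pos _)]; exact hUpt y)) (integrable_const _)]
    simp
  have hAd : A - At ≤ (U - L) / 2 * tvDist ν νt := by
    have := hdiff1; rw [hψint ν, hψint νt] at this; rw [hA, hAt]; linarith
  have hAd2 : At - A ≤ (U - L) / 2 * tvDist ν νt := by
    have := hdiff2; rw [hψint ν, hψint νt] at this; rw [hA, hAt]; linarith
  have hULord : L ≤ U := le_trans (hLpt y₀) (hUpt y₀)
  have htv : 0 ≤ tvDist ν νt := tvDist_nonneg ν νt
  have hM : 0 ≤ (U - L) / 2 * tvDist ν νt := mul_nonneg (by linarith) htv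
  have key : ∀ a b : ℝ, 0 < a → 0 < b → L ≤ a → b - a ≤ (U - L) / 2 * tvDist ν νt →
      log b - log a ≤ (exp (2 * d) - 1) / 2 * tvDist ν νt := by
    intro a b ha hb hLa hab
    have h1 : log b - log a = log (b / a) := (Real.log_div hb.ne' ha.ne').symm
    have h2 : log (b / a) ≤ b / a - 1 := Real.log_le_sub_one_of_pos (by positivity)
    have h3 : b / a - 1 = (b - a) / a := by field_simp
    have h4 : (b - a) / a ≤ ((U - L) / 2 * tvDist ν νt) / L := by
      rw [div_le_div_iff₀ ha hL]
      nlinarith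
    have h5 : ((U - L) / 2 * tvDist ν νt) / L ≤ (exp (2 * d) - 1) / 2 * tvDist ν νt := by
      rw [div_le_iff₀ hL]
      nlinarith [exp_pos (2 * d)]
    linarith
  rw [abs_sub_le_iff]
  exact ⟨key At A hAtpos hApos (hLA νt) hAd, key A At hApos hAtpos (hLA ν) hAd2⟩

end pot

section oneside
variable {X Y : Type*} [MeasurableSpace X] [MeasurableSpace Y] [Nonempty X] [Nonempty Y]

lemma oneside
    (ν νt : Measure Y) [IsProbabilityMeasure ν] [IsProbabilityMeasure νt]
    (μt : Measure X) [IsProbabilityMeasure μt]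
    (c : X → Y → ℝ) (hc_meas : Measurable (Function.uncurry c))
    (Mc : ℝ) (hc_bdd : ∀ x y, |c x y| ≤ Mc)
    (ε : ℝ) (hε : 0 < ε) (Dc : ℝ)
    (hDc : ∀ x x' y y', c x y + c x' y' - c x y' - c x' y ≤ 2 * Dc)
    (f ft : X → ℝ) (g gt : Y → ℝ)
    (hf_meas : Measurable f) (hft_meas : Measurable ft)
    (hg_meas : Measurable g) (hgt_meas : Measurable gt)
    (Mf : ℝ) (hf_bdd : ∀ x, |f x| ≤ Mf) (hft_bdd : ∀ x, |ft x| ≤ Mf)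
    (Mg : ℝ) (hg_bdd : ∀ y, |g y| ≤ Mg) (hgt_bdd : ∀ y, |gt y| ≤ Mg)
    (hf : ∀ x, f x = -ε * log (∫ y, exp ((g y - c x y) / ε) ∂ν))
    (hft : ∀ x, ft x = -ε * log (∫ y, exp ((gt y - c x y) / ε) ∂νt))
    (hgt : ∀ y, gt y = -ε * log (∫ x, exp ((ft x - c x y) / ε) ∂μt)) :
    oscVar (fun x => f x - ft x) ≤ (1 - exp (-(Dc / ε))) * oscVar (fun y => g y - gt y)
      + ε * (exp (2 * (Dc / ε)) - 1) * tvDist ν νt := by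
  have x₀ : X := Classical.arbitrary X
  have y₀ : Y := Classical.arbitrary Y
  have hDc0 : 0 ≤ Dc := by have := hDc x₀ x₀ y₀ y₀; linarith
  have hMg0 : 0 ≤ Mg := le_trans (abs_nonneg _) (hg_bdd y₀)
  have hMc0 : 0 ≤ Mc := le_trans (abs_nonneg _) (hc_bdd x₀ y₀)
  set d := Dc / ε with hd_def
  have hd : 0 ≤ d := div_nonneg hDc0 hε.le
  have hcx : ∀ x : X, Measurable (fun y => c x y) := fun x =>
    hc_meas.comp measurable_prodMk_left
  set a : X → Y → ℝ := fun x y => (gt y - c x y) / ε with hadef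
  set u : Y → ℝ := fun y => (g y - gt y) / ε with hudef
  have ham : ∀ x, Measurable (a x) := fun x => (hgt_meas.sub (hcx x)).div_const ε
  have hum : Measurable u := (hg_meas.sub hgt_meas).div_const ε
  have habsdiv : ∀ (v w : ℝ), |v| ≤ w → |v / ε| ≤ w / ε := fun v w h => by
    rw [abs_div, abs_of_pos hε]; exact div_le_div_of_nonneg_right h hε.le
  have hab : ∀ x y, |a x y| ≤ (Mg + Mc) / ε := fun x y => by
    apply habsdiv
    have := abs_le.1 (hgt_bdd y); have := abs_le.1 (hc_bdd x y)
    rw [abs_le]; constructor <;> linarith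
  have hub : ∀ y, |u y| ≤ 2 * Mg / ε := fun y => by
    apply habsdiv
    have := abs_le.1 (hg_bdd y); have := abs_le.1 (hgt_bdd y)
    rw [abs_le]; constructor <;> linarith
  set Bψ := (5 * Mg + Mc) / ε with hBψdef
  have hψb : ∀ (x : X) (s : ℝ), |s| ≤ 2 → ∀ y, |a x y + s * u y| ≤ Bψ := by
    intro x s hs y
    have h1 := hab x y
    have h2 := hub y
    have h3 : |s * u y| ≤ 2 * (2 * Mg / ε) := by
      rw [abs_mul]
      apply mul_le_mul hs h2 (abs_nonneg _) (by norm_num)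
    calc |a x y + s * u y| ≤ |a x y| + |s * u y| := abs_add_le _ _
    _ ≤ (Mg + Mc) / ε + 2 * (2 * Mg / ε) := by linarith
    _ = Bψ := by rw [hBψdef]; field_simp; ring
  have hψm : ∀ (x : X) (s : ℝ), Measurable (fun y => a x y + s * u y) := fun x s =>
    (ham x).add (hum.const_mul s)
  have ht2 : ∀ t : ℝ, t ∈ Icc (0:ℝ) 1 → |t| ≤ 2 := fun t ht => by
    rw [abs_le]; constructor <;> [linarith [ht.1]; linarith [ht.2]]
  -- positivity of the partition functions
  have hDpos : ∀ (x : X) (t : ℝ), |t| ≤ 2 → 0 < ∫ y, exp (a x y + t * u y) ∂ν :=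
    fun x t ht => exp_integral_pos (hψm x t) (hψb x t ht)
  -- derivative of the partition function
  have hD : ∀ (x : X) (t : ℝ), t ∈ Icc (0:ℝ) 1 →
      HasDerivAt (fun s => ∫ y, exp (a x y + s * u y) ∂ν)
        (∫ y, u y * exp (a x y + t * u y) ∂ν) t := by
    intro x t ht
    have key := hasDerivAt_integral_of_dominated_loc_of_deriv_le (μ := ν) (x₀ := t)
      (F := fun s (y : Y) => exp (a x y + s * u y))
      (F' := fun s (y : Y) => u y * exp (a x y + s * u y))
      (bound := fun _ => (2 * Mg / ε) * exp Bψ)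
      (s := Metric.ball t 1) (Metric.ball_mem_nhds t one_pos)
      (Filter.Eventually.of_forall (fun s => ((hψm x s).exp).aestronglyMeasurable))
      (integrable_of_bdd (B := exp Bψ) (hψm x t).exp (fun y => by
        rw [abs_of_pos (exp_pos _)]
        exact exp_le_exp.2 ((abs_le.1 (hψb x t (ht2 t ht) y)).2)))
      ((hum.mul (hψm x t).exp).aestronglyMeasurable)
      (Filter.Eventually.of_forall (fun y => by
        intro s hs
        have hs2 : |s| ≤ 2 := by
          rw [Metric.mem_ball, Real.dist_eq] at hs
          have h1 : |s| - |t| ≤ |s - t| := abs_sub_abs_le_abs_sub s t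
          have h2 : |t| ≤ 1 := abs_le.2 ⟨by linarith [ht.1], ht.2⟩
          linarith
        rw [Real.norm_eq_abs, abs_mul, abs_of_pos (exp_pos _)]
        apply mul_le_mul (hub y) (exp_le_exp.2 ((abs_le.1 (hψb x s hs2 y)).2))
          (exp_pos _).le (by positivity)))
      (integrable_const _)
      (Filter.Eventually.of_forall (fun y => by
        intro s hs
        have h1 : HasDerivAt (fun s : ℝ => a x y + s * u y) (u y) s := by
          simpa using ((hasDerivAt_id s).mul_const (u y)).const_add (a x y)
        simpa [mul_comm] using h1.exp))
    exact key.2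
  -- derivative of the numerator (used only for continuity)
  have hN : ∀ (x : X) (t : ℝ), t ∈ Icc (0:ℝ) 1 →
      HasDerivAt (fun s => ∫ y, u y * exp (a x y + s * u y) ∂ν)
        (∫ y, u y * (u y * exp (a x y + t * u y)) ∂ν) t := by
    intro x t ht
    have key := hasDerivAt_integral_of_dominated_loc_of_deriv_le (μ := ν) (x₀ := t)
      (F := fun s (y : Y) => u y * exp (a x y + s * u y))
      (F' := fun s (y : Y) => u y * (u y * exp (a x y + s * u y)))
      (bound := fun _ => (2 * Mg / ε) * ((2 * Mg / ε) * exp Bψ))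
      (s := Metric.ball t 1) (Metric.ball_mem_nhds t one_pos)
      (Filter.Eventually.of_forall (fun s => (hum.mul (hψm x s).exp).aestronglyMeasurable))
      (integrable_of_bdd (B := (2 * Mg / ε) * exp Bψ) (hum.mul (hψm x t).exp) (fun y => by
        rw [abs_mul, abs_of_pos (exp_pos _)]
        apply mul_le_mul (hub y) (exp_le_exp.2 ((abs_le.1 (hψb x t (ht2 t ht) y)).2))
          (exp_pos _).le (by positivity)))
      ((hum.mul (hum.mul (hψm x t).exp)).aestronglyMeasurable)
      (Filter.Eventually.of_forall (fun y => by
        intro s hs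
        have hs2 : |s| ≤ 2 := by
          rw [Metric.mem_ball, Real.dist_eq] at hs
          have h1 : |s| - |t| ≤ |s - t| := abs_sub_abs_le_abs_sub s t
          have h2 : |t| ≤ 1 := abs_le.2 ⟨by linarith [ht.1], ht.2⟩
          linarith
        rw [Real.norm_eq_abs, abs_mul]
        apply mul_le_mul (hub y) _ (abs_nonneg _) (by positivity)
        rw [abs_mul, abs_of_pos (exp_pos _)]
        apply mul_le_mul (hub y) (exp_le_exp.2 ((abs_le.1 (hψb x s hs2 y)).2))
          (exp_pos _).le (by positivity)))
      (integrable_const _)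
      (Filter.Eventually.of_forall (fun y => by
        intro s hs
        have h1 : HasDerivAt (fun s : ℝ => a x y + s * u y) (u y) s := by
          simpa using ((hasDerivAt_id s).mul_const (u y)).const_add (a x y)
        have h2 := h1.exp
        have h3 := h2.const_mul (u y)
        simpa [mul_comm, mul_left_comm] using h3))
    exact key.2
  -- interval integrability of the logarithmic derivative
  have hQint : ∀ x : X, IntervalIntegrable
      (fun t => (∫ y, u y * exp (a x y + t * u y) ∂ν) / (∫ y, exp (a x y + t * u y) ∂ν))
      MeasureTheory.volume 0 1 := by
    intro x
    apply ContinuousOn.intervalIntegrable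
    rw [uIcc_of_le zero_le_one]
    intro t ht
    exact (((hN x t ht).continuousAt.div (hD x t ht).continuousAt
      (hDpos x t (ht2 t ht)).ne').continuousWithinAt)
  -- fundamental theorem of calculus
  have hFTC : ∀ x : X,
      (∫ t in (0:ℝ)..1, (∫ y, u y * exp (a x y + t * u y) ∂ν) / (∫ y, exp (a x y + t * u y) ∂ν))
        = log (∫ y, exp (a x y + 1 * u y) ∂ν) - log (∫ y, exp (a x y + 0 * u y) ∂ν) := by
    intro x
    have := intervalIntegral.integral_eq_sub_of_hasDerivAt
      (f := fun t => log (∫ y, exp (a x y + t * u y) ∂ν))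
      (f' := fun t => (∫ y, u y * exp (a x y + t * u y) ∂ν) / (∫ y, exp (a x y + t * u y) ∂ν))
      (a := 0) (b := 1) ?_ (hQint x)
    · simpa using this
    · intro t ht
      rw [uIcc_of_le zero_le_one] at ht
      exact (hD x t ht).log (hDpos x t (ht2 t ht)).ne'
  -- pointwise-in-t contraction estimate
  set Kg := oscVar (fun y => g y - gt y) with hKgdef
  have hgb2 : ∀ y, |g y - gt y| ≤ 2 * Mg := fun y => by
    have := abs_le.1 (hg_bdd y); have := abs_le.1 (hgt_bdd y)
    rw [abs_le]; constructor <;> linarith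
  have hKg0 : 0 ≤ Kg := oscVar_nonneg hgb2
  have hKpair : ∀ y y', u y - u y' ≤ Kg / ε := fun y y' => by
    have hp := pair_le_oscVar hgb2 y y'
    have h2 : u y - u y' = ((g y - gt y) - (g y' - gt y')) / ε := by rw [hudef]; ring
    rw [h2]
    exact div_le_div_of_nonneg_right hp hε.le
  have hcore : ∀ (x x' : X) (t : ℝ), t ∈ Icc (0:ℝ) 1 →
      (∫ y, u y * exp (a x' y + t * u y) ∂ν) / (∫ y, exp (a x' y + t * u y) ∂ν)
        - (∫ y, u y * exp (a x y + t * u y) ∂ν) / (∫ y, exp (a x y + t * u y) ∂ν)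
        ≤ (Kg / ε) * (1 - exp (-d)) := by
    intro x x' t ht
    refine core_shift (ν := ν) u (fun y => a x y + t * u y) (fun y => a x' y + t * u y)
      hum (hψm x t) (hψm x' t) (2 * Mg / ε) hub Bψ (hψb x t (ht2 t ht)) (hψb x' t (ht2 t ht))
      (Kg / ε) hKpair d hd (fun y y' => ?_)
    have h := hDc x x' y y'
    have heq : ((a x' y + t * u y) - (a x y + t * u y))
        - ((a x' y' + t * u y') - (a x y' + t * u y'))
        = (c x y + c x' y' - c x y' - c x' y) / ε := by
      rw [hadef]; field_simp; ring
    rw [heq]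
    calc (c x y + c x' y' - c x y' - c x' y) / ε ≤ (2 * Dc) / ε :=
      div_le_div_of_nonneg_right h hε.le
    _ = 2 * d := by rw [hd_def]; ring
  -- integrated contraction estimate
  have hT1 : ∀ x x' : X,
      (log (∫ y, exp (a x' y + 1 * u y) ∂ν) - log (∫ y, exp (a x' y + 0 * u y) ∂ν))
      - (log (∫ y, exp (a x y + 1 * u y) ∂ν) - log (∫ y, exp (a x y + 0 * u y) ∂ν))
      ≤ (Kg / ε) * (1 - exp (-d)) := by
    intro x x'
    rw [← hFTC x, ← hFTC x', ← intervalIntegral.integral_sub (hQint x') (hQint x)]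
    have hmono := intervalIntegral.integral_mono_on (a := 0) (b := 1)
      (f := fun t => (∫ y, u y * exp (a x' y + t * u y) ∂ν) / (∫ y, exp (a x' y + t * u y) ∂ν)
        - (∫ y, u y * exp (a x y + t * u y) ∂ν) / (∫ y, exp (a x y + t * u y) ∂ν))
      (g := fun _ => (Kg / ε) * (1 - exp (-d)))
      zero_le_one ((hQint x').sub (hQint x)) intervalIntegrable_const
      (fun t ht => hcore x x' t ht)
    simpa using hmono
  -- normalization of the t = 0 endpoint
  have ha0 : ∀ x, ∫ y, exp (a x y + 0 * u y) ∂ν = ∫ y, exp (a x y) ∂ν := fun x => by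
    apply integral_congr_ae
    apply Filter.Eventually.of_forall
    intro y; norm_num
  -- stability term
  have hosc_gt : ∀ x y y', a x y - a x y' ≤ 2 * d := by
    intro x y y'
    have hpo := pot_osc μt c hc_meas Mc hc_bdd ε hε Dc hDc ft hft_meas Mf hft_bdd gt hgt x y y'
    have h2 : a x y - a x y' = ((gt y - c x y) - (gt y' - c x y')) / ε := by rw [hadef]; ring
    rw [h2]
    calc ((gt y - c x y) - (gt y' - c x y')) / ε ≤ (2 * Dc) / ε :=
      div_le_div_of_nonneg_right hpo hε.le
    _ = 2 * d := by rw [hd_def]; ring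
  have hstab : ∀ x : X, |log (∫ y, exp (a x y) ∂ν) - log (∫ y, exp (a x y) ∂νt)|
      ≤ (exp (2 * d) - 1) / 2 * tvDist ν νt := fun x =>
    log_int_stab ν νt (a x) (ham x) ((Mg + Mc) / ε) (hab x) d hd (hosc_gt x)
  -- identities for f and ft
  have hfx : ∀ x, f x = -ε * log (∫ y, exp (a x y + 1 * u y) ∂ν) := fun x => by
    have hint_eq : ∫ y, exp (a x y + 1 * u y) ∂ν = ∫ y, exp ((g y - c x y) / ε) ∂ν := by
      apply integral_congr_ae
      filter_upwards with y
      have hexps : a x y + 1 * u y = (g y - c x y) / ε := by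
        simp only [hadef, hudef]; field_simp; try ring
      rw [hexps]
    rw [hint_eq]; exact hf x
  have hftx : ∀ x, ft x = -ε * log (∫ y, exp (a x y) ∂νt) := fun x => by
    have hint_eq : ∫ y, exp (a x y) ∂νt = ∫ y, exp ((gt y - c x y) / ε) ∂νt := by
      apply integral_congr_ae
      filter_upwards with y
      simp only [hadef]
    rw [hint_eq]; exact hft x
  -- pairwise bound and conclusion
  have hfb2 : ∀ x, |f x - ft x| ≤ 2 * Mf := fun x => by
    have := abs_le.1 (hf_bdd x); have := abs_le.1 (hft_bdd x)
    rw [abs_le]; constructor <;> linarith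
  have htv0 : 0 ≤ tvDist ν νt := tvDist_nonneg ν νt
  have hpair : ∀ x x', (f x - ft x) - (f x' - ft x')
      ≤ Kg * (1 - exp (-d)) + ε * (exp (2 * d) - 1) * tvDist ν νt := by
    intro x x'
    have hT := hT1 x x'
    rw [ha0 x, ha0 x'] at hT
    have hS1 := abs_le.1 (hstab x)
    have hS2 := abs_le.1 (hstab x')
    rw [hfx x, hfx x', hftx x, hftx x']
    set Tx := log (∫ y, exp (a x y + 1 * u y) ∂ν) with hTx
    set Tx' := log (∫ y, exp (a x' y + 1 * u y) ∂ν) with hTx'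
    set Ax := log (∫ y, exp (a x y) ∂ν) with hAx
    set Ax' := log (∫ y, exp (a x' y) ∂ν) with hAx'
    set Sx := log (∫ y, exp (a x y) ∂νt) with hSx
    set Sx' := log (∫ y, exp (a x' y) ∂νt) with hSx'
    have hεK : ε * (Kg / ε * (1 - exp (-d))) = Kg * (1 - exp (-d)) := by field_simp
    have hb1 := mul_le_mul_of_nonneg_left hT hε.le
    rw [hεK] at hb1
    have hb2 : ε * (Sx - Ax) ≤ ε * ((exp (2 * d) - 1) / 2 * tvDist ν νt) :=
      mul_le_mul_of_nonneg_left (by linarith [hS1.1, hS1.2]) hε.le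
    have hb3 : ε * (Ax' - Sx') ≤ ε * ((exp (2 * d) - 1) / 2 * tvDist ν νt) :=
      mul_le_mul_of_nonneg_left (by linarith [hS2.1, hS2.2]) hε.le
    nlinarith [hb1, hb2, hb3]
  have := oscVar_le hfb2 hpair
  calc oscVar (fun x => f x - ft x) ≤ Kg * (1 - exp (-d)) + ε * (exp (2 * d) - 1) * tvDist ν νt := this
  _ = (1 - exp (-d)) * Kg + ε * (exp (2 * d) - 1) * tvDist ν νt := by ring



end oneside


/-- Quantitative stability of entropic potentials: if the bounded measurable
potentials `(f, g)` and `(ft, gt)` satisfy the Schrödinger fixed-point equations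
`g = T_μ(f)`, `f = T_ν(g)`, `gt = T_μt(ft)`, `ft = T_νt(gt)` for the bounded cost `c`
with twist constant `Dc`, then
`‖f − ft‖_var + ‖g − gt‖_var ≤ 2ε·e^{3Dc/ε}·(‖μ − μt‖_TV + ‖ν − νt‖_TV)`. -/
theorem entropic_potentials_stability
    {X Y : Type*} [MeasurableSpace X] [MeasurableSpace Y] [Nonempty X] [Nonempty Y]
    (μ μt : Measure X) [IsProbabilityMeasure μ] [IsProbabilityMeasure μt]
    (ν νt : Measure Y) [IsProbabilityMeasure ν] [IsProbabilityMeasure νt]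
    (c : X → Y → ℝ) (hc_meas : Measurable (Function.uncurry c))
    (Mc : ℝ) (hc_bdd : ∀ x y, |c x y| ≤ Mc)
    (ε : ℝ) (hε : 0 < ε)
    (Dc : ℝ)
    (hDc : ∀ x x' y y', c x y + c x' y' - c x y' - c x' y ≤ 2 * Dc)
    (f ft : X → ℝ) (g gt : Y → ℝ)
    (hf_meas : Measurable f) (hft_meas : Measurable ft)
    (hg_meas : Measurable g) (hgt_meas : Measurable gt)
    (Mf : ℝ) (hf_bdd : ∀ x, |f x| ≤ Mf) (hft_bdd : ∀ x, |ft x| ≤ Mf)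
    (Mg : ℝ) (hg_bdd : ∀ y, |g y| ≤ Mg) (hgt_bdd : ∀ y, |gt y| ≤ Mg)
    (hg : ∀ y, g y = -ε * log (∫ x, exp ((f x - c x y) / ε) ∂μ))
    (hf : ∀ x, f x = -ε * log (∫ y, exp ((g y - c x y) / ε) ∂ν))
    (hgt : ∀ y, gt y = -ε * log (∫ x, exp ((ft x - c x y) / ε) ∂μt))
    (hft : ∀ x, ft x = -ε * log (∫ y, exp ((gt y - c x y) / ε) ∂νt)) :
    oscVar (fun x => f x - ft x) + oscVar (fun y => g y - gt y)
      ≤ 2 * ε * exp (3 * Dc / ε) * (tvDist μ μt + tvDist ν νt) := by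
  have h1 := oneside ν νt μt c hc_meas Mc hc_bdd ε hε Dc hDc f ft g gt
    hf_meas hft_meas hg_meas hgt_meas Mf hf_bdd hft_bdd Mg hg_bdd hgt_bdd hf hft hgt
  have hc_meas' : Measurable (Function.uncurry (fun y x => c x y)) :=
    hc_meas.comp measurable_swap
  have hc_bdd' : ∀ (y : Y) (x : X), |c x y| ≤ Mc := fun y x => hc_bdd x y
  have hDc' : ∀ (y y' : Y) (x x' : X), c x y + c x' y' - c x' y - c x y' ≤ 2 * Dc :=
    fun y y' x x' => by have := hDc x x' y y'; linarith
  have h2 := oneside (X := Y) (Y := X) μ μt νt (fun y x => c x y) hc_meas' Mc hc_bdd'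
    ε hε Dc hDc' g gt f ft hg_meas hgt_meas hf_meas hft_meas Mg hg_bdd hgt_bdd
    Mf hf_bdd hft_bdd hg hgt hft
  set A := oscVar (fun x => f x - ft x) with hA
  set B := oscVar (fun y => g y - gt y) with hB
  set tvm := tvDist μ μt with htvm
  set tvn := tvDist ν νt with htvn
  have htvm0 : 0 ≤ tvm := tvDist_nonneg μ μt
  have htvn0 : 0 ≤ tvn := tvDist_nonneg ν νt
  set D1 := Dc / ε with hD1
  have he : exp (-D1) * exp D1 = 1 := by rw [← Real.exp_add]; simp
  have h3 : exp D1 * exp (2 * D1) = exp (3 * Dc / ε) := by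
    rw [← Real.exp_add]; congr 1; rw [hD1]; field_simp; ring
  have hsum : exp (-D1) * (A + B) ≤ ε * (exp (2 * D1) - 1) * (tvm + tvn) := by
    nlinarith [h1, h2]
  have hmul := mul_le_mul_of_nonneg_left hsum (exp_pos D1).le
  have hlhs : exp D1 * (exp (-D1) * (A + B)) = A + B := by
    rw [← mul_assoc, mul_comm (exp D1) (exp (-D1)), he, one_mul]
  rw [hlhs] at hmul
  have hrhs : exp D1 * (ε * (exp (2 * D1) - 1) * (tvm + tvn))
      = ε * (exp (3 * Dc / ε) - exp D1) * (tvm + tvn) := by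
    rw [← h3]; ring
  rw [hrhs] at hmul
  have hfinal : ε * (exp (3 * Dc / ε) - exp D1) * (tvm + tvn)
      ≤ 2 * ε * exp (3 * Dc / ε) * (tvm + tvn) := by
    apply mul_le_mul_of_nonneg_right _ (by linarith)
    nlinarith [exp_pos D1, exp_pos (3 * Dc / ε), hε]
  linarith
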